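/- For every λ ≥ 6π/(3π−8), one has 3·G_λ^{−1}(1/4) − λ(1 + 4/π) − 3 ≥ 0, where G_λ^{−1} is the inverse of G_λ(z) = (1/π)(√(λ²−z²) − z·arccos(z/λ)). -/

import Mathlib

noncomputable def G (l z : ℝ) : ℝ :=
  (1 / Real.pi) * (Real.sqrt (l ^ 2 - z ^ 2) - z * Real.arccos (z / l))

theorem stmt16 (l : ℝ) (hl : 6 * Real.pi / (3 * Real.pi - 8) ≤ l)
    (y : ℝ) (hy : y ∈ Set.Icc 0 l) (hGy : G l y = 1 / 4) :
    0 ≤ 3 * y - l * (1 + 4 / Real.pi) - 3 := by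
  have hπ : 0 < Real.pi := Real.pi_pos
  have hπu : Real.pi < 3.1416 := by linarith [Real.pi_lt_d6]
  have hπl : 3.1415 < Real.pi := by linarith [Real.pi_gt_d6]
  have hπ8 : (0:ℝ) < 3 * Real.pi - 8 := by nlinarith
  have hl0 : (13.2:ℝ) ≤ l := by
    refine le_trans ?_ hl
    rw [le_div_iff₀ hπ8]; nlinarith
  have hlpos : 0 < l := by linarith
  have hGfun : G l = fun z => (1 / Real.pi) *
      (Real.sqrt (l ^ 2 - z ^ 2) - z * Real.arccos (z / l)) := rfl
  -- strict antitonicity of G l on [0, l]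
  have hanti : StrictAntiOn (G l) (Set.Icc 0 l) := by
    apply strictAntiOn_of_deriv_neg (convex_Icc 0 l)
    · rw [hGfun]
      apply ContinuousOn.mul continuousOn_const
      apply ContinuousOn.sub
      · exact (Real.continuous_sqrt.comp (by continuity)).continuousOn
      · exact (continuous_id.mul (Real.continuous_arccos.comp
          (continuous_id.div_const l))).continuousOn
    · intro x hx
      rw [interior_Icc] at hx
      obtain ⟨hx0, hxl⟩ := hx
      have hlx : 0 < l ^ 2 - x ^ 2 := by nlinarith
      have hs0 : 0 < Real.sqrt (l ^ 2 - x ^ 2) := Real.sqrt_pos.mpr hlx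
      have hxl1 : x / l < 1 := (div_lt_one hlpos).mpr hxl
      have hxl0 : 0 < x / l := div_pos hx0 hlpos
      have hd1 : HasDerivAt (fun z : ℝ => l ^ 2 - z ^ 2) (-(2 * x)) x := by
        simpa using (hasDerivAt_pow 2 x).const_sub (l ^ 2)
      have hd2 : HasDerivAt (fun z : ℝ => Real.sqrt (l ^ 2 - z ^ 2))
          (-(2 * x) / (2 * Real.sqrt (l ^ 2 - x ^ 2))) x := hd1.sqrt hlx.ne'
      have hd3 : HasDerivAt (fun z : ℝ => z / l) (1 / l) x := by
        simpa using (hasDerivAt_id x).div_const l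
      have hd4 : HasDerivAt Real.arccos (-(1 / Real.sqrt (1 - (x / l) ^ 2))) (x / l) :=
        Real.hasDerivAt_arccos (by linarith) (ne_of_lt hxl1)
      have hd5 : HasDerivAt (fun z : ℝ => Real.arccos (z / l))
          (-(1 / Real.sqrt (1 - (x / l) ^ 2)) * (1 / l)) x := by have := hd4.comp x hd3; exact this
      have hd6 : HasDerivAt (fun z : ℝ => z * Real.arccos (z / l))
          (1 * Real.arccos (x / l) + x * (-(1 / Real.sqrt (1 - (x / l) ^ 2)) * (1 / l))) x :=
        (hasDerivAt_id x).mul hd5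
      have hd7 := ((hd2.sub hd6).const_mul (1 / Real.pi))
      have hss : Real.sqrt (1 - (x / l) ^ 2) = Real.sqrt (l ^ 2 - x ^ 2) / l := by
        rw [show (1 - (x / l) ^ 2) = (l ^ 2 - x ^ 2) / l ^ 2 by field_simp,
          Real.sqrt_div hlx.le, Real.sqrt_sq hlpos.le]
      have hdG : HasDerivAt (G l) (-Real.arccos (x / l) / Real.pi) x := by
        rw [hGfun]
        refine hd7.congr_deriv ?_
        rw [hss]
        field_simp
        ring
      rw [hdG.deriv]
      have harc : 0 < Real.arccos (x / l) := Real.arccos_pos.mpr hxl1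
      exact div_neg_of_neg_of_pos (by linarith) hπ
  -- numeric bounds
  have h11 : (3.3166:ℝ) ≤ Real.sqrt 11 := by
    nlinarith [Real.sqrt_nonneg (11:ℝ), Real.sq_sqrt (by norm_num : (0:ℝ) ≤ 11)]
  have hA : Real.arccos (5/6) ≤ 0.59 := by
    have hcb := Real.cos_bound (x := 0.59) (by rw [abs_of_nonneg] <;> norm_num)
    rw [abs_le] at hcb
    have h1 : Real.cos 0.59 ≤ 5/6 := by
      have := hcb.2
      rw [abs_of_nonneg (by norm_num : (0:ℝ) ≤ 0.59)] at this
      norm_num at this ⊢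
      linarith
    calc Real.arccos (5/6) ≤ Real.arccos (Real.cos 0.59) := by
          rw [Real.arccos, Real.arccos]
          have := Real.monotone_arcsin h1
          linarith
      _ = 0.59 := Real.arccos_cos (by norm_num) (by linarith)
  -- G l (5*l/6) ≥ 1/4
  have hmem1 : (5 * l / 6) ∈ Set.Icc (0:ℝ) l := ⟨by linarith, by linarith⟩
  have hs : Real.sqrt (l ^ 2 - (5 * l / 6) ^ 2) = Real.sqrt 11 * l / 6 := by
    rw [show l ^ 2 - (5 * l / 6) ^ 2 = (Real.sqrt 11 * l / 6) ^ 2 by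
      have h := Real.sq_sqrt (show (0:ℝ) ≤ 11 by norm_num)
      linear_combination (-(l ^ 2) / 36) * h]
    exact Real.sqrt_sq (by positivity)
  have hGval : G l (5 * l / 6) = (1 / Real.pi) *
      (Real.sqrt 11 * l / 6 - 5 * l / 6 * Real.arccos (5/6)) := by
    rw [hGfun]
    simp only
    rw [hs, show (5 * l / 6) / l = 5 / 6 by field_simp]
  have hG14 : (1:ℝ)/4 ≤ G l (5 * l / 6) := by
    rw [hGval]
    rw [show (1 / Real.pi) * (Real.sqrt 11 * l / 6 - 5 * l / 6 * Real.arccos (5/6))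
      = (Real.sqrt 11 * l / 6 - 5 * l / 6 * Real.arccos (5/6)) / Real.pi by ring,
      le_div_iff₀ hπ]
    nlinarith [hA, h11, Real.arccos_nonneg (5/6 : ℝ)]
  -- key inequality
  have hkey : 5 * l / 6 ≤ y := by
    by_contra h
    push_neg at h
    have := hanti hy hmem1 h
    rw [hGy] at this
    linarith
  -- conclude
  have hfin : 6 * Real.pi ≤ l * (3 * Real.pi - 8) := (div_le_iff₀ hπ8).mp hl
  have hinv : l * (4 / Real.pi) * Real.pi = 4 * l := by field_simp
  nlinarith [hkey, hfin, hinv, hπ, hlpos]
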